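/- Let x₀ < x₁ be real numbers, and for each n let J_n ⊆ [x₀, x₁] be a measurable set and U_n, V_n be jointly measurable stochastic processes indexed by J_n. Let p ≥ 1, r > 1 and r' satisfy 1/r = 1 − 1/r', and set q' = (p−1)r'. Assume there exists K such that sup_{a∈J_n} E|U_n(a)|^{q'} ≤ K and sup_{a∈J_n} E|V_n(a)|^{q'} ≤ K for all n, and that sup_{a∈J_n} E|U_n(a) − V_n(a)|^r = o(n^{−r/6}) as n → ∞. Then ∫_{J_n} |U_n(a)|^p da = ∫_{J_n} |V_n(a)|^p da + o_P(n^{−1/6}), i.e., for every ε > 0, P(n^{1/6} |∫_{J_n} |U_n(a)|^p da − ∫_{J_n} |V_n(a)|^p da| > ε) → 0 as n → ∞. -/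

import Mathlib

open MeasureTheory ProbabilityTheory Real Set Filter

noncomputable section

private lemma aux_core {p : ℝ} (hp : 1 ≤ p) {a b : ℝ} (hb : 0 ≤ b) (hba : b ≤ a) :
    a ^ p - b ^ p ≤ p * a ^ (p - 1) * (a - b) := by
  have ha : 0 ≤ a := hb.trans hba
  have hp0 : (0:ℝ) ≤ p := le_trans zero_le_one hp
  have H := Convex.norm_image_sub_le_of_norm_hasDerivWithin_le
    (f := fun x : ℝ => x ^ p) (f' := fun x : ℝ => p * x ^ (p - 1))
    (s := Icc (0:ℝ) a) (C := p * a ^ (p - 1))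
    (fun x _ => (Real.hasDerivAt_rpow_const (Or.inr hp)).hasDerivWithinAt)
    (fun x hx => by
      rw [Real.norm_eq_abs, abs_of_nonneg (mul_nonneg hp0 (Real.rpow_nonneg hx.1 _))]
      exact mul_le_mul_of_nonneg_left (Real.rpow_le_rpow hx.1 hx.2 (by linarith)) hp0)
    (convex_Icc 0 a) ⟨hb, hba⟩ ⟨ha, le_refl a⟩
  rw [Real.norm_eq_abs, Real.norm_eq_abs, abs_of_nonneg (sub_nonneg.2 hba)] at H
  exact le_trans (le_abs_self _) H

private lemma aux_pow_diff {p : ℝ} (hp : 1 ≤ p) (u v : ℝ) :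
    abs (|u| ^ p - |v| ^ p) ≤ p * ((|u| ^ (p-1) + |v| ^ (p-1)) * |u - v|) := by
  have hp0 : (0:ℝ) ≤ p := le_trans zero_le_one hp
  have key : ∀ a b : ℝ, 0 ≤ a → 0 ≤ b → b ≤ a →
      |a ^ p - b ^ p| ≤ p * ((a ^ (p-1) + b ^ (p-1)) * (a - b)) := by
    intro a b ha hb hba
    rw [abs_of_nonneg (sub_nonneg.2 (Real.rpow_le_rpow hb hba hp0))]
    have h1 := aux_core hp hb hba
    nlinarith [mul_nonneg (mul_nonneg hp0 (Real.rpow_nonneg hb (p-1))) (sub_nonneg.2 hba)]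
  rcases le_total (|v|) (|u|) with h | h
  · refine le_trans (key _ _ (abs_nonneg u) (abs_nonneg v) h) ?_
    have h1 : |u| - |v| ≤ |u - v| := abs_sub_abs_le_abs_sub u v
    have h2 : (0:ℝ) ≤ |u| ^ (p-1) + |v| ^ (p-1) := by positivity
    exact mul_le_mul_of_nonneg_left (mul_le_mul_of_nonneg_left h1 h2) hp0
  · have h0 : abs (|u| ^ p - |v| ^ p) = abs (|v| ^ p - |u| ^ p) := abs_sub_comm _ _
    rw [h0]
    refine le_trans (key _ _ (abs_nonneg v) (abs_nonneg u) h) ?_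
    have h1 : |v| - |u| ≤ |u - v| := by
      rw [abs_sub_comm]; exact abs_sub_abs_le_abs_sub v u
    have h2 : (0:ℝ) ≤ |v| ^ (p-1) + |u| ^ (p-1) := by positivity
    rw [add_comm (|u| ^ (p-1))]
    exact mul_le_mul_of_nonneg_left (mul_le_mul_of_nonneg_left h1 h2) hp0

private lemma step_holder {Ω : Type} [MeasurableSpace Ω] (P : Measure Ω)
    {p r r' K' εn : ℝ} (hp : 1 ≤ p) (hpq : Real.HolderConjugate r' r)
    (hK' : 0 ≤ K') (hεn : 0 ≤ εn)
    {Z W : Ω → ℝ} (hZ : Measurable Z) (hW : Measurable W)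
    (hZK : ∫⁻ ω, ENNReal.ofReal (|Z ω| ^ ((p - 1) * r')) ∂P ≤ ENNReal.ofReal K')
    (hWε : ∫⁻ ω, ENNReal.ofReal (|W ω| ^ r) ∂P ≤ ENNReal.ofReal εn) :
    ∫⁻ ω, ENNReal.ofReal (|Z ω| ^ (p - 1)) * ENNReal.ofReal (|W ω|) ∂P ≤
      ENNReal.ofReal (K' ^ (1 / r') * εn ^ (1 / r)) := by
  have hr'0 : (0:ℝ) ≤ r' := hpq.nonneg
  have hr0 : (0:ℝ) ≤ r := hpq.symm.nonneg
  have hZm : Measurable fun ω => ENNReal.ofReal (|Z ω| ^ (p - 1)) :=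
    ENNReal.measurable_ofReal.comp ((Real.continuous_rpow_const (by linarith)).measurable.comp hZ.abs)
  have hWm : Measurable fun ω => ENNReal.ofReal (|W ω|) :=
    ENNReal.measurable_ofReal.comp hW.abs
  calc ∫⁻ ω, ENNReal.ofReal (|Z ω| ^ (p - 1)) * ENNReal.ofReal (|W ω|) ∂P
      ≤ (∫⁻ ω, ENNReal.ofReal (|Z ω| ^ (p - 1)) ^ r' ∂P) ^ (1/r') *
        (∫⁻ ω, ENNReal.ofReal (|W ω|) ^ r ∂P) ^ (1/r) :=
        ENNReal.lintegral_mul_le_Lp_mul_Lq P hpq hZm.aemeasurable hWm.aemeasurable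
    _ = (∫⁻ ω, ENNReal.ofReal (|Z ω| ^ ((p - 1) * r')) ∂P) ^ (1/r') *
        (∫⁻ ω, ENNReal.ofReal (|W ω| ^ r) ∂P) ^ (1/r) := by
        congr 1
        · congr 1
          apply lintegral_congr; intro ω
          rw [ENNReal.ofReal_rpow_of_nonneg (Real.rpow_nonneg (abs_nonneg _) _) hr'0,
            ← Real.rpow_mul (abs_nonneg _)]
        · congr 1
          apply lintegral_congr; intro ω
          rw [ENNReal.ofReal_rpow_of_nonneg (abs_nonneg _) hr0]
    _ ≤ (ENNReal.ofReal K') ^ (1/r') * (ENNReal.ofReal εn) ^ (1/r) := by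
        exact mul_le_mul' (ENNReal.rpow_le_rpow hZK (by positivity))
          (ENNReal.rpow_le_rpow hWε (by positivity))
    _ = ENNReal.ofReal (K' ^ (1 / r') * εn ^ (1 / r)) := by
        rw [ENNReal.ofReal_rpow_of_nonneg hK' (by positivity),
          ENNReal.ofReal_rpow_of_nonneg hεn (by positivity),
          ← ENNReal.ofReal_mul (Real.rpow_nonneg hK' _)]

private lemma step_a {Ω : Type} [MeasurableSpace Ω] (P : Measure Ω)
    {p r r' K' εn : ℝ} (hp : 1 ≤ p) (hpq : Real.HolderConjugate r' r)
    (hK' : 0 ≤ K') (hεn : 0 ≤ εn)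
    {X Y : Ω → ℝ} (hX : Measurable X) (hY : Measurable Y)
    (hXK : ∫⁻ ω, ENNReal.ofReal (|X ω| ^ ((p - 1) * r')) ∂P ≤ ENNReal.ofReal K')
    (hYK : ∫⁻ ω, ENNReal.ofReal (|Y ω| ^ ((p - 1) * r')) ∂P ≤ ENNReal.ofReal K')
    (hXY : ∫⁻ ω, ENNReal.ofReal (|X ω - Y ω| ^ r) ∂P ≤ ENNReal.ofReal εn) :
    ∫⁻ ω, ENNReal.ofReal (abs (|X ω| ^ p - |Y ω| ^ p)) ∂P ≤
      ENNReal.ofReal (2 * p * (K' ^ (1 / r') * εn ^ (1 / r))) := by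
  have hp0 : (0:ℝ) ≤ p := le_trans zero_le_one hp
  set c : ℝ := K' ^ (1 / r') * εn ^ (1 / r) with hc
  have hc0 : 0 ≤ c := mul_nonneg (Real.rpow_nonneg hK' _) (Real.rpow_nonneg hεn _)
  have hXm : Measurable fun ω => ENNReal.ofReal (|X ω| ^ (p - 1)) :=
    ENNReal.measurable_ofReal.comp ((Real.continuous_rpow_const (by linarith)).measurable.comp hX.abs)
  have hYm : Measurable fun ω => ENNReal.ofReal (|Y ω| ^ (p - 1)) :=
    ENNReal.measurable_ofReal.comp ((Real.continuous_rpow_const (by linarith)).measurable.comp hY.abs)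
  have hWm : Measurable fun ω => ENNReal.ofReal (|X ω - Y ω|) :=
    ENNReal.measurable_ofReal.comp (hX.sub hY).abs
  have H1 := step_holder P hp hpq hK' hεn hX (hX.sub hY) hXK hXY
  have H2 := step_holder P hp hpq hK' hεn hY (hX.sub hY) hYK hXY
  calc ∫⁻ ω, ENNReal.ofReal (abs (|X ω| ^ p - |Y ω| ^ p)) ∂P
      ≤ ∫⁻ ω, ENNReal.ofReal p * ((ENNReal.ofReal (|X ω| ^ (p - 1)) +
          ENNReal.ofReal (|Y ω| ^ (p - 1))) * ENNReal.ofReal (|X ω - Y ω|)) ∂P := by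
        apply lintegral_mono; intro ω
        calc ENNReal.ofReal (abs (|X ω| ^ p - |Y ω| ^ p))
            ≤ ENNReal.ofReal (p * ((|X ω| ^ (p-1) + |Y ω| ^ (p-1)) * |X ω - Y ω|)) :=
              ENNReal.ofReal_le_ofReal (aux_pow_diff hp _ _)
          _ = _ := by
              rw [ENNReal.ofReal_mul hp0, ENNReal.ofReal_mul (by positivity),
                ENNReal.ofReal_add (by positivity) (by positivity)]
    _ = ENNReal.ofReal p * ((∫⁻ ω, ENNReal.ofReal (|X ω| ^ (p - 1)) * ENNReal.ofReal (|X ω - Y ω|) ∂P) +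
        ∫⁻ ω, ENNReal.ofReal (|Y ω| ^ (p - 1)) * ENNReal.ofReal (|X ω - Y ω|) ∂P) := by
        rw [lintegral_const_mul (f := fun ω => (ENNReal.ofReal (|X ω| ^ (p - 1)) +
          ENNReal.ofReal (|Y ω| ^ (p - 1))) * ENNReal.ofReal (|X ω - Y ω|)) _ ((hXm.add hYm).mul hWm)]
        congr 1
        rw [← lintegral_add_left (f := fun ω => ENNReal.ofReal (|X ω| ^ (p - 1)) * ENNReal.ofReal (|X ω - Y ω|)) (hXm.mul hWm)]
        apply lintegral_congr; intro ω; ring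
    _ ≤ ENNReal.ofReal p * (ENNReal.ofReal c + ENNReal.ofReal c) :=
        mul_le_mul' le_rfl (add_le_add H1 H2)
    _ = ENNReal.ofReal (2 * p * c) := by
        rw [← ENNReal.ofReal_add hc0 hc0, ← ENNReal.ofReal_mul hp0]
        congr 1; ring

/-- Lemma 6, case (i): if `U_n`, `V_n` are processes on `J_n ⊆ [x₀, x₁]` with
uniformly bounded moments of order `q' = (p−1)r'` (where `1/r = 1 − 1/r'`) and
`sup_{a∈J_n} E|U_n(a) − V_n(a)|^r = o(n^{−r/6})`, then
`∫_{J_n} |U_n(a)|^p da = ∫_{J_n} |V_n(a)|^p da + o_P(n^{−1/6})`. -/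
theorem stmt_8 (x₀ x₁ : ℝ) (hx : x₀ < x₁) (p r r' : ℝ) (hp : 1 ≤ p) (hr : 1 < r)
    (hrr' : 1 / r = 1 - 1 / r')
    (J : ℕ → Set ℝ) (hJm : ∀ n, MeasurableSet (J n)) (hJsub : ∀ n, J n ⊆ Icc x₀ x₁)
    (Ω : Type) [MeasurableSpace Ω] (P : Measure Ω) (hP : IsProbabilityMeasure P)
    (U V : ℕ → ℝ → Ω → ℝ)
    (hUm : ∀ n, Measurable (Function.uncurry (U n)))
    (hVm : ∀ n, Measurable (Function.uncurry (V n)))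
    (K : ℝ)
    -- uniformly bounded moments of order `q' = (p−1) r'`
    (hU : ∀ n, ∀ a ∈ J n,
      ∫⁻ ω, ENNReal.ofReal (|U n a ω| ^ ((p - 1) * r')) ∂P ≤ ENNReal.ofReal K)
    (hV : ∀ n, ∀ a ∈ J n,
      ∫⁻ ω, ENNReal.ofReal (|V n a ω| ^ ((p - 1) * r')) ∂P ≤ ENNReal.ofReal K)
    -- `sup_{a∈J_n} E|U_n(a) − V_n(a)|^r = o(n^{−r/6})`
    (hdiff : ∀ ε : ℝ, 0 < ε → ∃ N : ℕ, ∀ n : ℕ, N ≤ n → ∀ a ∈ J n,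
      ∫⁻ ω, ENNReal.ofReal (|U n a ω - V n a ω| ^ r) ∂P ≤
        ENNReal.ofReal (ε * (n:ℝ) ^ (-r/6))) :
    ∀ ε : ℝ, 0 < ε →
      Tendsto (fun n : ℕ => P {ω | ε < (n:ℝ) ^ ((1:ℝ)/6) *
        |(∫ a in J n, |U n a ω| ^ p) - ∫ a in J n, |V n a ω| ^ p|}) atTop (nhds 0) := by
  haveI := hP
  intro e he
  have hr0 : (0:ℝ) < r := lt_trans one_pos hr
  have hp0 : (0:ℝ) ≤ p := le_trans zero_le_one hp
  -- conjugate exponents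
  have hinvr0 : 0 < 1 / r := by positivity
  have hinvr1 : 1 / r < 1 := by rw [div_lt_one hr0]; exact hr
  have hinvr' : 1 / r' = 1 - 1 / r := by linarith
  have hinvr'pos : 0 < 1 / r' := by rw [hinvr']; linarith
  have hr'pos : 0 < r' := one_div_pos.mp hinvr'pos
  have hr'1 : 1 < r' := (div_lt_one hr'pos).mp (by rw [hinvr']; linarith)
  have hpq : Real.HolderConjugate r' r :=
    ⟨by rw [inv_one, ← one_div, ← one_div]; linarith, hr'pos, hr0⟩
  rw [ENNReal.tendsto_atTop_zero]
  intro δ hδ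
  obtain ⟨d, hd0, hdδ⟩ : ∃ d : ℝ, 0 < d ∧ ENNReal.ofReal d ≤ δ := by
    rcases eq_or_ne δ ⊤ with h | h
    · exact ⟨1, one_pos, by simp [h]⟩
    · exact ⟨δ.toReal, ENNReal.toReal_pos hδ.ne' h, by rw [ENNReal.ofReal_toReal h]⟩
  set K' : ℝ := max K 1 with hK'def
  have hK'1 : (1:ℝ) ≤ K' := le_max_right _ _
  have hK'0 : (0:ℝ) ≤ K' := by linarith
  have hK'p : (0:ℝ) < K' ^ (1 / r') := Real.rpow_pos_of_pos (by linarith) _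
  set C : ℝ := 2 * p * K' ^ (1 / r') * (x₁ - x₀) with hCdef
  have hxx : (0:ℝ) < x₁ - x₀ := sub_pos.2 hx
  have hppos : (0:ℝ) < p := lt_of_lt_of_le one_pos hp
  have hC0 : 0 < C := by rw [hCdef]; positivity
  set ε' : ℝ := (d * e / C) ^ r with hε'def
  have hde : 0 < d * e / C := by positivity
  have hε'0 : 0 < ε' := Real.rpow_pos_of_pos hde r
  obtain ⟨N, hN⟩ := hdiff ε' hε'0
  refine ⟨max N 1, fun n hn => ?_⟩
  have hnN : N ≤ n := le_trans (le_max_left _ _) hn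
  have hn1 : 1 ≤ n := le_trans (le_max_right _ _) hn
  have hn0 : (0:ℝ) < n := by
    have : (1:ℝ) ≤ (n:ℝ) := by exact_mod_cast hn1
    linarith
  -- notation
  set Bn : ℝ := 2 * p * (K' ^ (1 / r') * (ε' * (n:ℝ) ^ (-r/6)) ^ (1 / r)) with hBndef
  have hBn0 : 0 ≤ Bn := by rw [hBndef]; positivity
  set F : Ω → ℝ → ENNReal :=
    fun ω a => ENNReal.ofReal (abs (|U n a ω| ^ p - |V n a ω| ^ p)) with hFdef
  -- measurability
  have hUn : Measurable fun z : Ω × ℝ => U n z.2 z.1 := (hUm n).comp measurable_swap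
  have hVn : Measurable fun z : Ω × ℝ => V n z.2 z.1 := (hVm n).comp measurable_swap
  have hrpm : Measurable fun t : ℝ => t ^ p :=
    (Real.continuous_rpow_const hp0).measurable
  have hFm : Measurable (Function.uncurry F) :=
    ENNReal.measurable_ofReal.comp
      (((hrpm.comp hUn.abs).sub (hrpm.comp hVn.abs)).abs)
  have hDm : Measurable fun ω => ∫⁻ a in J n, F ω a :=
    Measurable.lintegral_prod_right hFm
  -- per-point moment bound
  have hper : ∀ a ∈ J n, ∫⁻ ω, F ω a ∂P ≤ ENNReal.ofReal Bn := by
    intro a ha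
    have hXa : Measurable fun ω => U n a ω := (hUm n).comp measurable_prodMk_left
    have hYa : Measurable fun ω => V n a ω := (hVm n).comp measurable_prodMk_left
    exact step_a P hp hpq hK'0 (by positivity) hXa hYa
      ((hU n a ha).trans (ENNReal.ofReal_le_ofReal (le_max_left K 1)))
      ((hV n a ha).trans (ENNReal.ofReal_le_ofReal (le_max_left K 1)))
      (hN n hnN a ha)
  -- integrated bound via Tonelli
  have hswap : ∫⁻ ω, (∫⁻ a in J n, F ω a) ∂P = ∫⁻ a in J n, (∫⁻ ω, F ω a ∂P) :=
    lintegral_lintegral_swap hFm.aemeasurable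
  have hbound : ∫⁻ ω, (∫⁻ a in J n, F ω a) ∂P ≤ ENNReal.ofReal ((x₁ - x₀) * Bn) := by
    rw [hswap]
    calc ∫⁻ a in J n, (∫⁻ ω, F ω a ∂P)
        ≤ ∫⁻ _a in J n, ENNReal.ofReal Bn := setLIntegral_mono measurable_const hper
      _ = ENNReal.ofReal Bn * volume (J n) := setLIntegral_const _ _
      _ ≤ ENNReal.ofReal Bn * ENNReal.ofReal (x₁ - x₀) := by
          refine mul_le_mul' le_rfl ?_
          calc volume (J n) ≤ volume (Icc x₀ x₁) := measure_mono (hJsub n)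
            _ = ENNReal.ofReal (x₁ - x₀) := Real.volume_Icc
      _ = ENNReal.ofReal ((x₁ - x₀) * Bn) := by
          rw [← ENNReal.ofReal_mul hBn0, mul_comm]
  -- event inclusion
  have hsub : {ω | e < (n:ℝ) ^ ((1:ℝ)/6) *
        |(∫ a in J n, |U n a ω| ^ p) - ∫ a in J n, |V n a ω| ^ p|} ⊆
      {ω | ENNReal.ofReal e ≤
        ENNReal.ofReal ((n:ℝ) ^ ((1:ℝ)/6)) * ∫⁻ a in J n, F ω a} := by
    intro ω hω
    simp only [mem_setOf_eq] at hω ⊢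
    by_cases hDtop : (∫⁻ a in J n, F ω a) = ⊤
    · rw [hDtop, ENNReal.mul_top
        (ENNReal.ofReal_pos.mpr (Real.rpow_pos_of_pos hn0 _)).ne']
      exact le_top
    · set f : ℝ → ℝ := fun a => |U n a ω| ^ p with hfdef
      set g : ℝ → ℝ := fun a => |V n a ω| ^ p with hgdef
      have hfm : Measurable f :=
        hrpm.comp ((hUm n).comp measurable_prodMk_right).abs
      have hgm : Measurable g :=
        hrpm.comp ((hVm n).comp measurable_prodMk_right).abs
      have hf0 : ∀ a, 0 ≤ f a := fun a => Real.rpow_nonneg (abs_nonneg _) _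
      have hg0 : ∀ a, 0 ≤ g a := fun a => Real.rpow_nonneg (abs_nonneg _) _
      have hFeq : ∀ a, F ω a = ENNReal.ofReal (|f a - g a|) := fun a => rfl
      have hint : ∀ h : ℝ → ℝ, Measurable h → (∀ a, 0 ≤ h a) →
          (Integrable h (volume.restrict (J n)) ↔
            (∫⁻ a in J n, ENNReal.ofReal (h a)) < ⊤) := by
        intro h hm h0
        constructor
        · intro hi
          rw [← hasFiniteIntegral_iff_ofReal (ae_of_all _ h0)]
          exact hi.2
        · intro hfin
          exact ⟨hm.aestronglyMeasurable,
            (hasFiniteIntegral_iff_ofReal (ae_of_all _ h0)).mpr hfin⟩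
      have hDlt : (∫⁻ a in J n, F ω a) < ⊤ := lt_top_iff_ne_top.2 hDtop
      by_cases hfi : Integrable f (volume.restrict (J n))
      · have hgi : Integrable g (volume.restrict (J n)) := by
          rw [hint g hgm hg0]
          have hle : ∀ a, ENNReal.ofReal (g a) ≤ ENNReal.ofReal (f a) + F ω a := by
            intro a
            rw [hFeq a, ← ENNReal.ofReal_add (hf0 a) (abs_nonneg _)]
            refine ENNReal.ofReal_le_ofReal ?_
            have h1 := le_abs_self (g a - f a)
            rw [abs_sub_comm] at h1
            linarith
          calc ∫⁻ a in J n, ENNReal.ofReal (g a)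
              ≤ ∫⁻ a in J n, (ENNReal.ofReal (f a) + F ω a) := lintegral_mono hle
            _ = (∫⁻ a in J n, ENNReal.ofReal (f a)) + ∫⁻ a in J n, F ω a :=
                lintegral_add_left (ENNReal.measurable_ofReal.comp hfm) _
            _ < ⊤ := ENNReal.add_lt_top.2 ⟨(hint f hfm hf0).mp hfi, hDlt⟩
        have habs : |(∫ a in J n, f a) - ∫ a in J n, g a| ≤
            (∫⁻ a in J n, F ω a).toReal := by
          rw [← integral_sub hfi hgi]
          have h1 := norm_integral_le_lintegral_norm
            (μ := volume.restrict (J n)) (f := fun a => f a - g a)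
          simp only [Real.norm_eq_abs] at h1
          exact h1
        have h2 : e < (n:ℝ) ^ ((1:ℝ)/6) * (∫⁻ a in J n, F ω a).toReal :=
          lt_of_lt_of_le hω
            (mul_le_mul_of_nonneg_left habs (Real.rpow_nonneg hn0.le _))
        calc ENNReal.ofReal e
            ≤ ENNReal.ofReal ((n:ℝ) ^ ((1:ℝ)/6) * (∫⁻ a in J n, F ω a).toReal) :=
              ENNReal.ofReal_le_ofReal h2.le
          _ = ENNReal.ofReal ((n:ℝ) ^ ((1:ℝ)/6)) *
              ENNReal.ofReal ((∫⁻ a in J n, F ω a).toReal) :=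
              ENNReal.ofReal_mul (Real.rpow_nonneg hn0.le _)
          _ = ENNReal.ofReal ((n:ℝ) ^ ((1:ℝ)/6)) * ∫⁻ a in J n, F ω a := by
              rw [ENNReal.ofReal_toReal hDtop]
      · have hgi : ¬ Integrable g (volume.restrict (J n)) := by
          intro hgi
          apply hfi
          rw [hint f hfm hf0]
          have hle : ∀ a, ENNReal.ofReal (f a) ≤ ENNReal.ofReal (g a) + F ω a := by
            intro a
            rw [hFeq a, ← ENNReal.ofReal_add (hg0 a) (abs_nonneg _)]
            refine ENNReal.ofReal_le_ofReal ?_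
            have h1 := le_abs_self (f a - g a)
            linarith
          calc ∫⁻ a in J n, ENNReal.ofReal (f a)
              ≤ ∫⁻ a in J n, (ENNReal.ofReal (g a) + F ω a) := lintegral_mono hle
            _ = (∫⁻ a in J n, ENNReal.ofReal (g a)) + ∫⁻ a in J n, F ω a :=
                lintegral_add_left (ENNReal.measurable_ofReal.comp hgm) _
            _ < ⊤ := ENNReal.add_lt_top.2 ⟨(hint g hgm hg0).mp hgi, hDlt⟩
        rw [integral_undef hfi, integral_undef hgi] at hω
        simp only [sub_zero, abs_zero, mul_zero] at hω
        exact absurd hω (not_lt.2 he.le)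
  -- key numeric inequality
  have hkey : (n:ℝ) ^ ((1:ℝ)/6) * ((x₁ - x₀) * Bn) ≤ d * e := by
    have h1 : (ε' * (n:ℝ) ^ (-r/6)) ^ (1/r) =
        (d * e / C) * (n:ℝ) ^ (-(1:ℝ)/6) := by
      rw [Real.mul_rpow hε'0.le (Real.rpow_nonneg hn0.le _)]
      congr 1
      · rw [hε'def, ← Real.rpow_mul hde.le, mul_one_div, div_self hr0.ne',
          Real.rpow_one]
      · rw [← Real.rpow_mul hn0.le]
        congr 1
        field_simp
    have h2 : (n:ℝ) ^ ((1:ℝ)/6) * (n:ℝ) ^ (-(1:ℝ)/6) = 1 := by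
      rw [← Real.rpow_add hn0]
      norm_num
    have h3 : (n:ℝ) ^ ((1:ℝ)/6) * ((x₁ - x₀) * Bn) =
        (d * e / C) * C * ((n:ℝ) ^ ((1:ℝ)/6) * (n:ℝ) ^ (-(1:ℝ)/6)) := by
      rw [hBndef, h1, hCdef]; ring
    rw [h3, h2, mul_one, div_mul_cancel₀ _ hC0.ne']
  -- Markov and conclusion
  calc P {ω | e < (n:ℝ) ^ ((1:ℝ)/6) *
        |(∫ a in J n, |U n a ω| ^ p) - ∫ a in J n, |V n a ω| ^ p|}
      ≤ P {ω | ENNReal.ofReal e ≤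
          ENNReal.ofReal ((n:ℝ) ^ ((1:ℝ)/6)) * ∫⁻ a in J n, F ω a} :=
        measure_mono hsub
    _ ≤ (∫⁻ ω, ENNReal.ofReal ((n:ℝ) ^ ((1:ℝ)/6)) * (∫⁻ a in J n, F ω a) ∂P) /
        ENNReal.ofReal e :=
        meas_ge_le_lintegral_div (measurable_const.mul hDm).aemeasurable
          (ENNReal.ofReal_pos.mpr he).ne' ENNReal.ofReal_ne_top
    _ = (ENNReal.ofReal ((n:ℝ) ^ ((1:ℝ)/6)) * ∫⁻ ω, (∫⁻ a in J n, F ω a) ∂P) /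
        ENNReal.ofReal e := by rw [lintegral_const_mul _ hDm]
    _ ≤ (ENNReal.ofReal ((n:ℝ) ^ ((1:ℝ)/6)) * ENNReal.ofReal ((x₁ - x₀) * Bn)) /
        ENNReal.ofReal e :=
        ENNReal.div_le_div_right (mul_le_mul' le_rfl hbound) _
    _ = ENNReal.ofReal ((n:ℝ) ^ ((1:ℝ)/6) * ((x₁ - x₀) * Bn)) / ENNReal.ofReal e := by
        rw [← ENNReal.ofReal_mul (Real.rpow_nonneg hn0.le _)]
    _ ≤ ENNReal.ofReal (d * e) / ENNReal.ofReal e :=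
        ENNReal.div_le_div_right (ENNReal.ofReal_le_ofReal hkey) _
    _ = ENNReal.ofReal d := by
        rw [ENNReal.ofReal_mul hd0.le, mul_div_assoc,
          ENNReal.div_self (ENNReal.ofReal_pos.mpr he).ne' ENNReal.ofReal_ne_top,
          mul_one]
    _ ≤ δ := hdδ
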